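/- arXiv:2503.22653 — 5 statements merged into one kernel-verified Lean document; each statement's English description precedes it below -/
import Mathlib

section
/- Fix b in R^{d+1} and indices i ≠ j, k ≠ l in [d+1]. If the system S_{i,j,k,l}(b), consisting of the equation x_i - x_j = x_k - b_k - x_l + b_l together with the inequalities x_i - x_j ≥ x_m - x_n for all m, n and x_k - b_k - x_l + b_l ≥ x_m - b_m - x_n + b_n for all m, n, has a solution x in R^{d+1}, then b_j ≤ b_i, b_k ≤ b_l, and b_k ≤ b_i. -/
def Sset {d : ℕ} (b : Fin (d+1) → ℝ) (i j k l : Fin (d+1)) : Set (Fin (d+1) → ℝ) :=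
  {x | x i - x j = x k - b k - x l + b l ∧
       (∀ m n : Fin (d+1), x i - x j ≥ x m - x n) ∧
       (∀ m n : Fin (d+1), x k - b k - x l + b l ≥ x m - b m - x n + b n)}

theorem stmt3 {d : ℕ} (b : Fin (d+1) → ℝ) (i j k l : Fin (d+1))
    (hij : i ≠ j) (hkl : k ≠ l) (h : (Sset b i j k l).Nonempty) :
    b j ≤ b i ∧ b k ≤ b l ∧ b k ≤ b i := by
  obtain ⟨x, heq, h1, h2⟩ := h
  refine ⟨?_, ?_, ?_⟩
  · have := h2 i j; linarith
  · have := h1 k l; linarith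
  · have := h2 i l; have := h1 k j; linarith
end

section
/- Fix b in R^{d+1} and indices i ≠ j, k with k ≠ i. If the system S_{i,j,k,i}(b) is nonempty, then b_i = max_m b_m and b_j ≥ 2·b_k - b_i. -/
theorem stmt4 {d : ℕ} (b : Fin (d+1) → ℝ) (i j k : Fin (d+1))
    (hij : i ≠ j) (hki : k ≠ i) (h : (Sset b i j k i).Nonempty) :
    (∀ m : Fin (d+1), b m ≤ b i) ∧ b j ≥ 2 * b k - b i := by
  obtain ⟨x, heq, h2, h3⟩ := h
  constructor
  · intro m
    have := h3 k m
    have := h2 m j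
    linarith
  · have := h3 j i
    have := h2 k j
    linarith
end

section
/- Fix b in R^{d+1} and indices i ≠ j, l with l ≠ j. If the system S_{i,j,j,l}(b) is nonempty, then b_j = min_m b_m and b_j ≤ 2·b_l - b_i. -/
theorem stmt5 {d : ℕ} (b : Fin (d+1) → ℝ) (i j l : Fin (d+1))
    (hij : i ≠ j) (hjl : j ≠ l) (h : (Sset b i j j l).Nonempty) :
    (∀ m : Fin (d+1), b j ≤ b m) ∧ b j ≤ 2 * b l - b i := by
  obtain ⟨x, he, h2, h3⟩ := h
  constructor
  · intro m
    have hm := h3 m l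
    have hx := h2 i m
    linarith
  · have h1 := h3 j i
    have h2' := h2 i l
    linarith
end

section
/- For b in R^{d+1} and i ≠ j, the set S_{i,j,j,i}(b) is nonempty if and only if b_i = max_m b_m and b_j = min_m b_m. Moreover, when these conditions hold, the point x = (1/2)·b lies in S_{i,j,j,i}(b). -/
theorem stmt6 {d : ℕ} (b : Fin (d+1) → ℝ) (i j : Fin (d+1)) (hij : i ≠ j) :
    ((Sset b i j j i).Nonempty ↔
      (∀ m : Fin (d+1), b m ≤ b i) ∧ (∀ m : Fin (d+1), b j ≤ b m)) ∧
    ((∀ m : Fin (d+1), b m ≤ b i) → (∀ m : Fin (d+1), b j ≤ b m) →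
      (fun m => (1/2 : ℝ) * b m) ∈ Sset b i j j i) := by
  have hmem : (∀ m : Fin (d+1), b m ≤ b i) → (∀ m : Fin (d+1), b j ≤ b m) →
      (fun m => (1/2 : ℝ) * b m) ∈ Sset b i j j i := by
    intro hi hj
    refine ⟨by ring, fun m n => ?_, fun m n => ?_⟩
    · have h1 := hi m
      have h2 := hj n
      simp only
      linarith
    · have h1 := hi n
      have h2 := hj m
      simp only
      linarith
  refine ⟨⟨fun ⟨x, heq, h2, h3⟩ => ?_, fun ⟨hi, hj⟩ => ⟨_, hmem hi hj⟩⟩, hmem⟩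
  constructor <;> intro m
  · have ha := h3 j m
    have hb := h2 m j
    linarith
  · have ha := h3 m i
    have hb := h2 i m
    linarith
end

section
/- Let b in R^{d+1} have b_1 = min_m b_m and b_{d+1} = max_m b_m, with all coordinates of b distinct, and let m, n be indices with b_n < b_m. Then S_{m,1,1,n}(b) and S_{d+1,m,n,d+1}(b) cannot both be nonempty. -/
theorem stmt10 {d : ℕ} (b : Fin (d+1) → ℝ)
    (hmin : ∀ p : Fin (d+1), b 0 ≤ b p)
    (hmax : ∀ p : Fin (d+1), b p ≤ b (Fin.last d))
    (hinj : Function.Injective b)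
    (m n : Fin (d+1)) (hnm : b n < b m) :
    ¬ ((Sset b m 0 0 n).Nonempty ∧ (Sset b (Fin.last d) m n (Fin.last d)).Nonempty) := by
  rintro ⟨⟨x, hx1, hx2, hx3⟩, ⟨y, hy1, hy2, hy3⟩⟩
  have L := Fin.last d
  have h1 := hx2 m n
  have h2 := hx2 n 0
  have h3 := hx2 (Fin.last d) 0
  have h4 := hx2 m (Fin.last d)
  have h5 := hx3 m n
  have h6 := hx3 0 m
  have h7 := hx3 (Fin.last d) n
  have h8 := hx3 0 (Fin.last d)
  have h9 := hx3 m 0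
  have h10 := hx3 (Fin.last d) 0
  have g1 := hy2 n m
  have g2 := hy2 (Fin.last d) n
  have g3 := hy2 0 m
  have g4 := hy2 (Fin.last d) 0
  have g5 := hy3 n m
  have g6 := hy3 m (Fin.last d)
  have g7 := hy3 0 (Fin.last d)
  have g8 := hy3 n 0
  have g9 := hy3 0 m
  have g10 := hy3 m n
  have hb1 := hmin m
  have hb2 := hmin n
  have hb3 := hmax m
  have hb4 := hmax n
  have hb5 := hmax 0
  linarith
end
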